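/- Let n and S be positive integers, let H be an n×S complex matrix with HᴴH invertible, let h ∈ ℂⁿ, let P₀ > 0, and let U := H(HᴴH)⁻¹Hᴴ. Then for every w ∈ ℂⁿ satisfying wᴴw ≤ P₀ and wᴴH = 0, one has |wᴴh|² ≤ P₀ · ‖(I − U)h‖². -/

import Mathlib

open Matrix

/-- Upper bound for the null-steering beamforming problem: for every
feasible `w` (power constraint `wᴴ w ≤ P₀` and nulling constraint `wᴴ H = 0`),
one has `|wᴴ h|² ≤ P₀ · ‖(I - U) h‖²` where `U = H (Hᴴ H)⁻¹ Hᴴ` and `‖·‖` is the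
Euclidean norm. -/
theorem nullSteering_upper_bound (n S : ℕ) (hn : 0 < n) (hS : 0 < S)
    (H : Matrix (Fin n) (Fin S) ℂ) [Invertible (Hᴴ * H)] (h : Fin n → ℂ)
    (P₀ : ℝ) (hP₀ : 0 < P₀)
    (U : Matrix (Fin n) (Fin n) ℂ) (hU : U = H * (Hᴴ * H)⁻¹ * Hᴴ) :
    ∀ w : Fin n → ℂ, (∑ i, ‖w i‖ ^ 2) ≤ P₀ → star w ᵥ* H = 0 →
      ‖star w ⬝ᵥ h‖ ^ 2 ≤ P₀ * ∑ i, ‖((1 - U) *ᵥ h) i‖ ^ 2 := by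
  intro w hw hnull
  set g : Fin n → ℂ := (1 - U) *ᵥ h with hg
  have hkey : star w ⬝ᵥ h = star w ⬝ᵥ g := by
    have hvU : star w ᵥ* U = 0 := by
      rw [hU, ← Matrix.vecMul_vecMul, ← Matrix.vecMul_vecMul,
        hnull, Matrix.zero_vecMul, Matrix.zero_vecMul]
    rw [hg, Matrix.sub_mulVec, Matrix.one_mulVec, dotProduct_sub,
      Matrix.dotProduct_mulVec, hvU, zero_dotProduct, sub_zero]
  set x : EuclideanSpace ℂ (Fin n) := (WithLp.equiv 2 _).symm w
  set y : EuclideanSpace ℂ (Fin n) := (WithLp.equiv 2 _).symm g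
  have hinner : (inner ℂ x y : ℂ) = star w ⬝ᵥ g :=
    (EuclideanSpace.inner_toLp_toLp w g).trans (dotProduct_comm _ _)
  have hcs : ‖(inner ℂ x y : ℂ)‖ ≤ ‖x‖ * ‖y‖ := norm_inner_le_norm x y
  have hxsq : ‖x‖ ^ 2 = ∑ i, ‖w i‖ ^ 2 := by
    rw [EuclideanSpace.norm_eq]
    rw [Real.sq_sqrt (by positivity)]
    rfl
  have hysq : ‖y‖ ^ 2 = ∑ i, ‖g i‖ ^ 2 := by
    rw [EuclideanSpace.norm_eq]
    rw [Real.sq_sqrt (by positivity)]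
    rfl
  calc ‖star w ⬝ᵥ h‖ ^ 2 = ‖(inner ℂ x y : ℂ)‖ ^ 2 := by
        rw [hinner, ← hkey]
    _ ≤ (‖x‖ * ‖y‖) ^ 2 := by
        apply pow_le_pow_left₀ (norm_nonneg _) hcs
    _ = ‖x‖ ^ 2 * ‖y‖ ^ 2 := by ring
    _ ≤ P₀ * ∑ i, ‖g i‖ ^ 2 := by
        rw [hxsq, hysq]
        apply mul_le_mul_of_nonneg_right hw (by positivity)
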